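/- Let 0<q<1 be real (q ≠ 1 suffices with q ≠ 0), let a,b,c,ã,b̃,c̃ be complex-valued functions, Φ a function of two complex variables, h a function of one complex variable, ξ a nonzero complex number, x a nonzero complex number, and K ≤ L integers. Assume (1) a(x)Φ(x/q,s)+b(x)Φ(x,s)+c(x)Φ(qx,s) = ã(s)Φ(x,s/q)+b̃(s)Φ(x,s)+c̃(s)Φ(x,qs) holds for s = q^{n}ξ for every integer n with K ≤ n ≤ L, and (2) q·ã(qs)h(qs) + b̃(s)h(s) + q^{−1}·c̃(s/q)h(s/q) = 0 holds for s = q^{n}ξ for every integer n with K ≤ n ≤ L. Define g^{[K,L]}(y) = (1−q)·Σ_{n=K}^{L} q^{n}ξ·h(q^{n}ξ)·Φ(y,q^{n}ξ). Then a(x)g^{[K,L]}(x/q) + b(x)g^{[K,L]}(x) + c(x)g^{[K,L]}(qx) = −(1−q)·[q·s·ã(qs)h(qs)Φ(x,s) − s·c̃(s)h(s)Φ(x,qs)] evaluated at s = q^{L}ξ, plus (1−q)·[q·s·ã(qs)h(qs)Φ(x,s) − s·c̃(s)h(s)Φ(x,qs)] evaluated at s = q^{K−1}ξ. -/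
import Mathlib


open Filter Topology

/-- The infinite q-Pochhammer symbol `(a;q)_∞ = ∏_{j=0}^∞ (1 - q^j a)`. -/
noncomputable def qPochInf (q : ℝ) (a : ℂ) : ℂ := ∏' j : ℕ, (1 - (q : ℂ) ^ j * a)

/-- `q^r` for a real exponent `r`, using the principal branch of the complex power. -/
noncomputable def qpow (q : ℝ) (r : ℝ) : ℂ := (q : ℂ) ^ (r : ℂ)


private lemma tele_aux (D : ℤ → ℂ) (K : ℤ) : ∀ M : ℤ, K ≤ M →
    ∑ n ∈ Finset.Icc K M, (D (n - 1) - D n) = D (K - 1) - D M := by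
  refine Int.le_induction ?_ ?_
  · simp
  · intro M hM ih
    have hins : Finset.Icc K (M + 1) = insert (M + 1) (Finset.Icc K M) :=
      Finset.ext fun y => by simp [Finset.mem_Icc]; omega
    rw [hins, Finset.sum_insert (by simp [Finset.mem_Icc]), ih]
    have e : M + 1 - 1 = M := by ring
    rw [e]; ring

theorem stmt8 (q : ℝ) (hq0 : 0 < q) (hq1 : q < 1)
    (a b c ta tb tc : ℂ → ℂ) (Φ : ℂ → ℂ → ℂ) (h : ℂ → ℂ)
    (ξ x : ℂ) (hξ : ξ ≠ 0) (hx : x ≠ 0) (K L : ℤ) (hKL : K ≤ L)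
    (hker : ∀ n : ℤ, K ≤ n → n ≤ L → ∀ s : ℂ, s = (q : ℂ) ^ n * ξ →
      a x * Φ (x / (q : ℂ)) s + b x * Φ x s + c x * Φ ((q : ℂ) * x) s
        = ta s * Φ x (s / (q : ℂ)) + tb s * Φ x s + tc s * Φ x ((q : ℂ) * s))
    (hh : ∀ n : ℤ, K ≤ n → n ≤ L → ∀ s : ℂ, s = (q : ℂ) ^ n * ξ →
      (q : ℂ) * ta ((q : ℂ) * s) * h ((q : ℂ) * s) + tb s * h s
        + (q : ℂ)⁻¹ * tc (s / (q : ℂ)) * h (s / (q : ℂ)) = 0)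
    (g : ℂ → ℂ)
    (hg : ∀ y : ℂ, g y = (1 - (q : ℂ)) *
      ∑ n ∈ Finset.Icc K L, (q : ℂ) ^ n * ξ * h ((q : ℂ) ^ n * ξ) * Φ y ((q : ℂ) ^ n * ξ)) :
    a x * g (x / (q : ℂ)) + b x * g x + c x * g ((q : ℂ) * x)
      = -((1 - (q : ℂ)) *
          ((q : ℂ) * ((q : ℂ) ^ L * ξ) * ta ((q : ℂ) * ((q : ℂ) ^ L * ξ)) *
              h ((q : ℂ) * ((q : ℂ) ^ L * ξ)) * Φ x ((q : ℂ) ^ L * ξ)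
            - ((q : ℂ) ^ L * ξ) * tc ((q : ℂ) ^ L * ξ) * h ((q : ℂ) ^ L * ξ) *
              Φ x ((q : ℂ) * ((q : ℂ) ^ L * ξ))))
        + (1 - (q : ℂ)) *
          ((q : ℂ) * ((q : ℂ) ^ (K - 1) * ξ) * ta ((q : ℂ) * ((q : ℂ) ^ (K - 1) * ξ)) *
              h ((q : ℂ) * ((q : ℂ) ^ (K - 1) * ξ)) * Φ x ((q : ℂ) ^ (K - 1) * ξ)
            - ((q : ℂ) ^ (K - 1) * ξ) * tc ((q : ℂ) ^ (K - 1) * ξ) * h ((q : ℂ) ^ (K - 1) * ξ) *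
              Φ x ((q : ℂ) * ((q : ℂ) ^ (K - 1) * ξ))) := by

  have hq : (q : ℂ) ≠ 0 := by exact_mod_cast hq0.ne'
  -- the telescoped quantity
  set D : ℤ → ℂ := fun n =>
    (q : ℂ) * ((q : ℂ) ^ n * ξ) * ta ((q : ℂ) * ((q : ℂ) ^ n * ξ)) *
        h ((q : ℂ) * ((q : ℂ) ^ n * ξ)) * Φ x ((q : ℂ) ^ n * ξ)
      - ((q : ℂ) ^ n * ξ) * tc ((q : ℂ) ^ n * ξ) * h ((q : ℂ) ^ n * ξ) *
        Φ x ((q : ℂ) * ((q : ℂ) ^ n * ξ)) with hD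
  have tele := tele_aux D K
  have key : ∀ n ∈ Finset.Icc K L,
      a x * ((q : ℂ) ^ n * ξ * h ((q : ℂ) ^ n * ξ) * Φ (x / (q : ℂ)) ((q : ℂ) ^ n * ξ))
        + b x * ((q : ℂ) ^ n * ξ * h ((q : ℂ) ^ n * ξ) * Φ x ((q : ℂ) ^ n * ξ))
        + c x * ((q : ℂ) ^ n * ξ * h ((q : ℂ) ^ n * ξ) * Φ ((q : ℂ) * x) ((q : ℂ) ^ n * ξ))
      = D (n - 1) - D n := by
    intro n hn
    rw [Finset.mem_Icc] at hn
    set s : ℂ := (q : ℂ) ^ n * ξ with hs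
    have hker' := hker n hn.1 hn.2 s hs
    have hh' := hh n hn.1 hn.2 s hs
    have e1 : (q : ℂ) ^ (n - 1) * ξ = s / (q : ℂ) := by
      rw [hs, zpow_sub_one₀ hq]; ring
    have e2 : (q : ℂ) * (s / (q : ℂ)) = s := by field_simp
    rw [hD]
    simp only [e1, e2]
    linear_combination (s * h s) * hker' + (s * Φ x s) * hh'
  calc a x * g (x / (q : ℂ)) + b x * g x + c x * g ((q : ℂ) * x)
      = (1 - (q : ℂ)) * ∑ n ∈ Finset.Icc K L,
          (a x * ((q : ℂ) ^ n * ξ * h ((q : ℂ) ^ n * ξ) * Φ (x / (q : ℂ)) ((q : ℂ) ^ n * ξ))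
            + b x * ((q : ℂ) ^ n * ξ * h ((q : ℂ) ^ n * ξ) * Φ x ((q : ℂ) ^ n * ξ))
            + c x * ((q : ℂ) ^ n * ξ * h ((q : ℂ) ^ n * ξ) * Φ ((q : ℂ) * x) ((q : ℂ) ^ n * ξ))) := by
        rw [hg, hg, hg, Finset.sum_add_distrib, Finset.sum_add_distrib,
          ← Finset.mul_sum, ← Finset.mul_sum, ← Finset.mul_sum]
        ring
    _ = (1 - (q : ℂ)) * (D (K - 1) - D L) := by
        rw [Finset.sum_congr rfl key, tele L hKL]
    _ = _ := by rw [hD]; ring
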